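/- arXiv:2511.18819 — 2 statements merged into one kernel-verified Lean document; each statement's English description precedes it below -/
import Mathlib

section
/- Let 1 < p ≤ 2, d ≥ 2, and S(B) = (1 + |B|²)^{(p−2)/2} B for symmetric d×d matrices. Then there exists a constant c₂ > 0 such that for all symmetric matrices B and C, |S(B) − S(C)| ≤ c₂ (1 + |B|² + |C|²)^{(p−2)/2} |B − C|. -/
noncomputable section

open Set

/-- Frobenius norm of a real `d × d` matrix. -/
def fnorm {d : ℕ} (B : Matrix (Fin d) (Fin d) ℝ) : ℝ :=
  Real.sqrt (∑ i, ∑ j, (B i j) ^ 2)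

/-- The power-law extra stress tensor `S(B) = (1 + |B|²)^((p-2)/2) B`. -/
def SS {d : ℕ} (p : ℝ) (B : Matrix (Fin d) (Fin d) ℝ) : Matrix (Fin d) (Fin d) ℝ :=
  fun i j => (1 + fnorm B ^ 2) ^ ((p - 2) / 2) * B i j

attribute [local instance] Matrix.frobeniusSeminormedAddCommGroup
  Matrix.frobeniusNormedAddCommGroup Matrix.frobeniusNormedSpace

lemma fnorm_eq {d : ℕ} (B : Matrix (Fin d) (Fin d) ℝ) : fnorm B = ‖B‖ := by
  rw [Matrix.frobenius_norm_def, fnorm, Real.sqrt_eq_rpow]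
  congr 1
  refine Finset.sum_congr rfl fun i _ => Finset.sum_congr rfl fun j _ => ?_
  rw [Real.rpow_two, Real.norm_eq_abs, sq_abs]

lemma fnorm_nonneg' {d : ℕ} (B : Matrix (Fin d) (Fin d) ℝ) : 0 ≤ fnorm B :=
  Real.sqrt_nonneg _

/-- monotonicity of `x ↦ x * (1+x²)^α` for `-1/2 ≤ α ≤ 0`. -/
lemma phi_mono {α a b : ℝ} (h1 : -(1/2) ≤ α) (h2 : α ≤ 0) (hb : 0 ≤ b) (hab : b ≤ a) :
    b * (1 + b ^ 2) ^ α ≤ a * (1 + a ^ 2) ^ α := by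
  have ha : 0 ≤ a := hb.trans hab
  have hpb : (0:ℝ) < 1 + b ^ 2 := by positivity
  have hpa : (0:ℝ) < 1 + a ^ 2 := by positivity
  have hsq : b * Real.sqrt (1 + a ^ 2) ≤ a * Real.sqrt (1 + b ^ 2) := by
    have h := Real.sqrt_le_sqrt (show b ^ 2 * (1 + a ^ 2) ≤ a ^ 2 * (1 + b ^ 2) by nlinarith)
    rwa [Real.sqrt_mul (sq_nonneg b), Real.sqrt_mul (sq_nonneg a), Real.sqrt_sq hb,
      Real.sqrt_sq ha] at h
  have hinv : b * (1 + b ^ 2) ^ (-(1/2) : ℝ) ≤ a * (1 + a ^ 2) ^ (-(1/2) : ℝ) := by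
    rw [Real.rpow_neg hpb.le, Real.rpow_neg hpa.le, ← Real.sqrt_eq_rpow,
      ← Real.sqrt_eq_rpow, ← div_eq_mul_inv, ← div_eq_mul_inv,
      div_le_div_iff₀ (Real.sqrt_pos.2 hpb) (Real.sqrt_pos.2 hpa)]
    exact hsq
  have split : ∀ x : ℝ, 0 < x → x ^ α = x ^ (-(1/2) : ℝ) * x ^ (α + 1/2) := fun x hx => by
    rw [← Real.rpow_add hx]; norm_num
  have hexp : (1 + b ^ 2) ^ (α + 1/2) ≤ (1 + a ^ 2) ^ (α + 1/2) :=
    Real.rpow_le_rpow hpb.le (by nlinarith) (by linarith)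
  calc b * (1 + b ^ 2) ^ α
      = (b * (1 + b ^ 2) ^ (-(1/2) : ℝ)) * (1 + b ^ 2) ^ (α + 1/2) := by
        rw [split _ hpb]; ring
    _ ≤ (a * (1 + a ^ 2) ^ (-(1/2) : ℝ)) * (1 + a ^ 2) ^ (α + 1/2) :=
        mul_le_mul hinv hexp (Real.rpow_nonneg hpb.le _)
          (mul_nonneg ha (Real.rpow_nonneg hpa.le _))
    _ = a * (1 + a ^ 2) ^ α := by rw [split _ hpa]; ring

/-- key difference estimate -/
lemma key_diff {α a b : ℝ} (h1 : -(1/2) ≤ α) (h2 : α ≤ 0) (hb : 0 ≤ b) (hab : b ≤ a) :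
    ((1 + b ^ 2) ^ α - (1 + a ^ 2) ^ α) * b ≤ 3 * ((1 + a ^ 2) ^ α * (a - b)) := by
  have ha : 0 ≤ a := hb.trans hab
  have hpb : (0:ℝ) < 1 + b ^ 2 := by positivity
  have hpa : (0:ℝ) < 1 + a ^ 2 := by positivity
  have hgA : (0:ℝ) < (1 + a ^ 2) ^ α := Real.rpow_pos_of_pos hpa _
  have hgB : (0:ℝ) < (1 + b ^ 2) ^ α := Real.rpow_pos_of_pos hpb _
  rcases le_or_gt a (2 * b) with hc | hc
  · -- Bernoulli case
    set t : ℝ := (1 + a ^ 2) / (1 + b ^ 2) with ht_def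
    have ht : 1 ≤ t := (one_le_div hpb).2 (by nlinarith)
    have hber : t ^ (-α) ≤ 1 + (-α) * (t - 1) := by
      have h := rpow_one_add_le_one_add_mul_self (s := t - 1) (by linarith)
        (p := -α) (by linarith) (by linarith)
      rwa [add_sub_cancel] at h
    have hid : (1 + a ^ 2) ^ α * t ^ (-α) = (1 + b ^ 2) ^ α := by
      rw [ht_def, Real.div_rpow hpa.le hpb.le, Real.rpow_neg hpa.le, Real.rpow_neg hpb.le]
      field_simp
    have hD : (1 + b ^ 2) ^ α - (1 + a ^ 2) ^ α ≤ (1 + a ^ 2) ^ α * ((-α) * (t - 1)) := by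
      calc (1 + b ^ 2) ^ α - (1 + a ^ 2) ^ α = (1 + a ^ 2) ^ α * (t ^ (-α) - 1) := by
            rw [← hid]; ring
        _ ≤ (1 + a ^ 2) ^ α * ((-α) * (t - 1)) := by
            apply mul_le_mul_of_nonneg_left _ hgA.le
            linarith
    have hT : (t - 1) * (1 + b ^ 2) = a ^ 2 - b ^ 2 := by
      rw [ht_def, sub_mul, div_mul_cancel₀ _ hpb.ne']; ring
    have h5 : (t - 1) * b * (1 + b ^ 2) = (a ^ 2 - b ^ 2) * b := by
      rw [show (t - 1) * b * (1 + b ^ 2) = ((t - 1) * (1 + b ^ 2)) * b by ring, hT]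
    have h4 : (t - 1) * b ≤ 3 * (a - b) := by
      nlinarith [h5, hpb, sub_nonneg.2 hab,
        mul_nonneg (mul_nonneg hb (sub_nonneg.2 hab)) (by linarith : (0:ℝ) ≤ 2 * b - a)]
    have h3' : (-α) * ((t - 1) * b) ≤ 3 * (a - b) := by
      have hX : 0 ≤ (t - 1) * b := mul_nonneg (by linarith) hb
      nlinarith [mul_nonneg (by linarith : (0:ℝ) ≤ α + 1/2) hX, h4, sub_nonneg.2 hab]
    calc ((1 + b ^ 2) ^ α - (1 + a ^ 2) ^ α) * b
        ≤ ((1 + a ^ 2) ^ α * ((-α) * (t - 1))) * b := mul_le_mul_of_nonneg_right hD hb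
      _ = (1 + a ^ 2) ^ α * ((-α) * ((t - 1) * b)) := by ring
      _ ≤ (1 + a ^ 2) ^ α * (3 * (a - b)) := mul_le_mul_of_nonneg_left h3' hgA.le
      _ = 3 * ((1 + a ^ 2) ^ α * (a - b)) := by ring
  · -- separated case
    calc ((1 + b ^ 2) ^ α - (1 + a ^ 2) ^ α) * b
        ≤ (1 + b ^ 2) ^ α * b := by nlinarith
      _ = b * (1 + b ^ 2) ^ α := by ring
      _ ≤ a * (1 + a ^ 2) ^ α := phi_mono h1 h2 hb hab
      _ ≤ (2 * (a - b)) * (1 + a ^ 2) ^ α := by nlinarith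
      _ ≤ 3 * ((1 + a ^ 2) ^ α * (a - b)) := by nlinarith

theorem stmt5 (p : ℝ) (hp1 : 1 < p) (hp2 : p ≤ 2) (d : ℕ) (hd : 2 ≤ d) :
    ∃ c₂ > (0:ℝ), ∀ B C : Matrix (Fin d) (Fin d) ℝ, B.IsSymm → C.IsSymm →
      fnorm (SS p B - SS p C)
        ≤ c₂ * (1 + fnorm B ^ 2 + fnorm C ^ 2) ^ ((p - 2) / 2) * fnorm (B - C) := by
  have hα1 : -(1/2) ≤ (p - 2) / 2 := by linarith
  have hα2 : (p - 2) / 2 ≤ 0 := by linarith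
  set α := (p - 2) / 2 with hαdef
  refine ⟨8, by norm_num, ?_⟩
  have main : ∀ B C : Matrix (Fin d) (Fin d) ℝ, fnorm C ≤ fnorm B →
      fnorm (SS p B - SS p C)
        ≤ 8 * (1 + fnorm B ^ 2 + fnorm C ^ 2) ^ α * fnorm (B - C) := by
    intro B C hcb
    have hb0 : 0 ≤ fnorm C := fnorm_nonneg' C
    have ha0 : 0 ≤ fnorm B := fnorm_nonneg' B
    set a := fnorm B with hadef
    set b := fnorm C with hbdef
    have hpa : (0:ℝ) < 1 + a ^ 2 := by positivity
    have hpb : (0:ℝ) < 1 + b ^ 2 := by positivity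
    have hpm : (0:ℝ) < 1 + a ^ 2 + b ^ 2 := by positivity
    set gA := (1 + a ^ 2) ^ α with hgAdef
    set gB := (1 + b ^ 2) ^ α with hgBdef
    set M := (1 + a ^ 2 + b ^ 2) ^ α with hMdef
    have hgA : 0 < gA := Real.rpow_pos_of_pos hpa _
    have hgB : 0 < gB := Real.rpow_pos_of_pos hpb _
    have hM : 0 < M := Real.rpow_pos_of_pos hpm _
    have hAB : gA ≤ gB := Real.rpow_le_rpow_of_nonpos hpb (by nlinarith) hα2
    -- gA ≤ 2 * M
    have h2M : gA ≤ 2 * M := by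
      have hbase : (2 * (1 + a ^ 2)) ^ α ≤ M :=
        Real.rpow_le_rpow_of_nonpos hpm (by nlinarith) hα2
      have hmul : (2:ℝ) ^ α * gA = (2 * (1 + a ^ 2)) ^ α := by
        rw [hgAdef, ← Real.mul_rpow (by norm_num) hpa.le]
      have h2a : (2:ℝ) ^ (-α) ≤ 2 := by
        calc (2:ℝ) ^ (-α) ≤ (2:ℝ) ^ (1:ℝ) :=
              Real.rpow_le_rpow_of_exponent_le one_le_two (by linarith)
          _ = 2 := Real.rpow_one 2
      have hinv : gA = (2:ℝ) ^ (-α) * ((2:ℝ) ^ α * gA) := by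
        rw [← mul_assoc, ← Real.rpow_add (by norm_num : (0:ℝ) < 2)]
        simp
      calc gA = (2:ℝ) ^ (-α) * ((2:ℝ) ^ α * gA) := hinv
        _ = (2:ℝ) ^ (-α) * (2 * (1 + a ^ 2)) ^ α := by rw [hmul]
        _ ≤ 2 * M := by
            apply mul_le_mul h2a hbase (Real.rpow_nonneg (by positivity) _) (by norm_num)
    -- decomposition
    have hSB : SS p B = gA • B := by
      funext i j
      simp [SS, hgAdef, hadef, hαdef, Matrix.smul_apply, smul_eq_mul]
    have hSC : SS p C = gB • C := by
      funext i j
      simp [SS, hgBdef, hbdef, hαdef, Matrix.smul_apply, smul_eq_mul]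
    have hdec : SS p B - SS p C = gA • (B - C) + (gA - gB) • C := by
      rw [hSB, hSC, smul_sub, sub_smul]
      abel
    have hnorm : fnorm (SS p B - SS p C) ≤ gA * fnorm (B - C) + (gB - gA) * b := by
      rw [hdec, fnorm_eq]
      calc ‖gA • (B - C) + (gA - gB) • C‖ ≤ ‖gA • (B - C)‖ + ‖(gA - gB) • C‖ :=
            norm_add_le _ _
        _ = |gA| * ‖B - C‖ + |gA - gB| * ‖C‖ := by rw [norm_smul, norm_smul]; rfl
        _ = gA * fnorm (B - C) + (gB - gA) * b := by
            rw [abs_of_pos hgA, abs_of_nonpos (by linarith), ← fnorm_eq, ← fnorm_eq]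
            ring
    have hkey : (gB - gA) * b ≤ 3 * (gA * (a - b)) := key_diff hα1 hα2 hb0 hcb
    have hsub : a - b ≤ fnorm (B - C) := by
      rw [hadef, hbdef, fnorm_eq, fnorm_eq, fnorm_eq]
      exact norm_sub_norm_le B C
    have hnn : 0 ≤ fnorm (B - C) := fnorm_nonneg' _
    calc fnorm (SS p B - SS p C) ≤ gA * fnorm (B - C) + (gB - gA) * b := hnorm
      _ ≤ (2 * M) * fnorm (B - C) + 3 * (gA * (a - b)) := by
          have := mul_le_mul_of_nonneg_right h2M hnn
          linarith
      _ ≤ (2 * M) * fnorm (B - C) + 3 * ((2 * M) * fnorm (B - C)) := by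
          have hab' : 0 ≤ a - b := by linarith
          have h1 : gA * (a - b) ≤ (2 * M) * (a - b) := mul_le_mul_of_nonneg_right h2M hab'
          have h2 : (2 * M) * (a - b) ≤ (2 * M) * fnorm (B - C) :=
            mul_le_mul_of_nonneg_left hsub (by linarith)
          linarith
      _ = 8 * M * fnorm (B - C) := by ring
  intro B C _ _
  rcases le_total (fnorm C) (fnorm B) with h | h
  · exact main B C h
  · have H := main C B h
    calc fnorm (SS p B - SS p C) = fnorm (SS p C - SS p B) := by
          rw [fnorm_eq, fnorm_eq, norm_sub_rev]
      _ ≤ 8 * (1 + fnorm C ^ 2 + fnorm B ^ 2) ^ α * fnorm (C - B) := H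
      _ = 8 * (1 + fnorm B ^ 2 + fnorm C ^ 2) ^ α * fnorm (B - C) := by
          rw [add_right_comm (1:ℝ), fnorm_eq (C - B), fnorm_eq (B - C), norm_sub_rev]
end
end

section
/- (Local version of Gronwall's lemma) Let T, α, c₀ > 0 be constants, h ∈ L¹(0,T) with h ≥ 0 a.e., and f ∈ C¹[0,T] with f ≥ 0 satisfying f'(t) ≤ h(t) + c₀ f(t)^{1+α} for all t ∈ [0,T]. Define H(t) = f(0) + ∫₀ᵗ h(s) ds, and let t₀ ∈ [0,T] satisfy α c₀ H(t₀)^α t₀ < 1. Then for all t ∈ [0, t₀], f(t) ≤ H(t) + H(t)·((1 − α c₀ H(t)^α t)^{−1/α} − 1). -/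
noncomputable section

open Set MeasureTheory Filter Topology

theorem stmt7 (T α c₀ : ℝ) (hT : 0 < T) (hα : 0 < α) (hc₀ : 0 < c₀)
    (h f f' : ℝ → ℝ)
    (hh_int : IntervalIntegrable h volume 0 T)
    (hh_nonneg : ∀ᵐ t ∂(volume.restrict (Set.Icc (0:ℝ) T)), 0 ≤ h t)
    (hf_deriv : ∀ t ∈ Set.Icc (0:ℝ) T, HasDerivAt f (f' t) t)
    (hf'_cont : ContinuousOn f' (Set.Icc (0:ℝ) T))
    (hf_nonneg : ∀ t ∈ Set.Icc (0:ℝ) T, 0 ≤ f t)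
    (hineq : ∀ t ∈ Set.Icc (0:ℝ) T, f' t ≤ h t + c₀ * f t ^ (1 + α))
    (H : ℝ → ℝ) (hH : ∀ t, H t = f 0 + ∫ s in (0:ℝ)..t, h s)
    (t₀ : ℝ) (ht₀ : t₀ ∈ Set.Icc (0:ℝ) T) (hsmall : α * c₀ * H t₀ ^ α * t₀ < 1) :
    ∀ t ∈ Set.Icc (0:ℝ) t₀,
      f t ≤ H t + H t * ((1 - α * c₀ * H t ^ α * t) ^ (-(1/α)) - 1) := by
  have hfc : ContinuousOn f (Set.Icc (0:ℝ) T) :=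
    fun t ht => (hf_deriv t ht).continuousAt.continuousWithinAt
  -- clamped integrand
  set g : ℝ → ℝ := fun s => f (max 0 (min s T)) ^ (1 + α) with hg_def
  have hclamp : ∀ s, max 0 (min s T) ∈ Set.Icc (0:ℝ) T := by
    intro s
    constructor
    · exact le_max_left _ _
    · exact max_le hT.le (min_le_right _ _)
  have hg_cont : Continuous g := by
    have hc : Continuous fun s : ℝ => max 0 (min s T) :=
      continuous_const.max (continuous_id.min continuous_const)
    have : Continuous fun s => f (max 0 (min s T)) :=
      hfc.comp_continuous hc hclamp
    exact this.rpow_const (fun s => Or.inr (by positivity))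
  have hg_eq : ∀ s ∈ Set.Icc (0:ℝ) T, g s = f s ^ (1 + α) := by
    intro s hs
    simp only [hg_def]
    rw [min_eq_left hs.2, max_eq_right hs.1]
  have hg_nonneg : ∀ s, 0 ≤ g s := fun s =>
    Real.rpow_nonneg (hf_nonneg _ (hclamp s)) _
  -- the auxiliary function u
  set u : ℝ → ℝ := fun t => c₀ * ∫ s in (0:ℝ)..t, g s with hu_def
  have hu_deriv : ∀ t : ℝ, HasDerivAt u (c₀ * g t) t := by
    intro t
    exact (intervalIntegral.integral_hasDerivAt_right
      (hg_cont.intervalIntegrable 0 t)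
      (hg_cont.stronglyMeasurableAtFilter volume (𝓝 t))
      hg_cont.continuousAt).const_mul c₀
  have hu0 : u 0 = 0 := by simp [hu_def]
  have hu_nonneg : ∀ t, 0 ≤ t → 0 ≤ u t := by
    intro t ht
    have : 0 ≤ ∫ s in (0:ℝ)..t, g s :=
      intervalIntegral.integral_nonneg ht (fun s _ => hg_nonneg s)
    positivity
  -- H is monotone on [0,T] and nonnegative
  have hf0 : 0 ≤ f 0 := hf_nonneg 0 ⟨le_rfl, hT.le⟩
  have hHmono : ∀ s t : ℝ, 0 ≤ s → s ≤ t → t ≤ T → H s ≤ H t := by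
    intro s t hs hst htT
    have hint_t : IntervalIntegrable h volume 0 t := by
      apply hh_int.mono_set
      rw [Set.uIcc_of_le (hs.trans hst), Set.uIcc_of_le hT.le]
      exact Set.Icc_subset_Icc le_rfl htT
    have hint_s : IntervalIntegrable h volume 0 s := by
      apply hh_int.mono_set
      rw [Set.uIcc_of_le hs, Set.uIcc_of_le hT.le]
      exact Set.Icc_subset_Icc le_rfl (hst.trans htT)
    have hsub : (∫ x in (0:ℝ)..t, h x) - ∫ x in (0:ℝ)..s, h x = ∫ x in s..t, h x :=
      intervalIntegral.integral_interval_sub_left hint_t hint_s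
    have hnn : 0 ≤ ∫ x in s..t, h x := by
      apply intervalIntegral.integral_nonneg_of_ae_restrict hst
      exact ae_mono (Measure.restrict_mono (Set.Icc_subset_Icc hs htT) le_rfl) hh_nonneg
    have := hsub ▸ hnn
    rw [hH s, hH t]
    linarith
  have hH0 : ∀ t : ℝ, 0 ≤ t → t ≤ T → 0 ≤ H t := by
    intro t ht htT
    have h1 := hHmono 0 t le_rfl ht htT
    rw [hH 0, intervalIntegral.integral_same, add_zero] at h1
    linarith
  -- f ≤ H + u on [0,T]
  have hfu : ∀ t ∈ Set.Icc (0:ℝ) T, f t ≤ H t + u t := by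
    intro t ht
    have h0t : Set.uIcc (0:ℝ) t = Set.Icc 0 t := Set.uIcc_of_le ht.1
    have hsubT : Set.Icc (0:ℝ) t ⊆ Set.Icc 0 T := Set.Icc_subset_Icc le_rfl ht.2
    have hint_h : IntervalIntegrable h volume 0 t := by
      apply hh_int.mono_set
      rw [h0t, Set.uIcc_of_le hT.le]
      exact hsubT
    have hint_g : IntervalIntegrable (fun s => h s + c₀ * g s) volume 0 t :=
      hint_h.add ((continuous_const.mul hg_cont).intervalIntegrable 0 t)
    have hint_f' : IntervalIntegrable f' volume 0 t := by
      apply ContinuousOn.intervalIntegrable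
      rw [h0t]; exact hf'_cont.mono hsubT
    have heq : (∫ s in (0:ℝ)..t, f' s) = f t - f 0 := by
      apply intervalIntegral.integral_eq_sub_of_hasDerivAt
      · intro x hx
        rw [h0t] at hx
        exact hf_deriv x (hsubT hx)
      · exact hint_f'
    have hmono : (∫ s in (0:ℝ)..t, f' s) ≤ ∫ s in (0:ℝ)..t, (h s + c₀ * g s) := by
      apply intervalIntegral.integral_mono_on ht.1 hint_f' hint_g
      intro s hs
      have hsT := hsubT hs
      rw [hg_eq s hsT]
      exact hineq s hsT
    have hsplit : (∫ s in (0:ℝ)..t, (h s + c₀ * g s))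
        = (∫ s in (0:ℝ)..t, h s) + c₀ * ∫ s in (0:ℝ)..t, g s := by
      rw [intervalIntegral.integral_add (g := fun s => c₀ * g s) hint_h ((continuous_const.mul hg_cont).intervalIntegrable 0 t),
        intervalIntegral.integral_const_mul]
    rw [hH t]
    simp only [hu_def]
    linarith [heq ▸ hmono, hsplit]
  -- main proof
  intro t ht
  have ht0 : 0 ≤ t := ht.1
  have htt₀ : t ≤ t₀ := ht.2
  have htT : t ≤ T := htt₀.trans ht₀.2
  have htIcc : t ∈ Set.Icc (0:ℝ) T := ⟨ht0, htT⟩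
  have hHt0 : 0 ≤ H t := hH0 t ht0 htT
  have hHtle : H t ≤ H t₀ := hHmono t t₀ ht0 htt₀ ht₀.2
  -- key quantitative estimate with a positive shift ε
  have key : ∀ ε : ℝ, 0 < ε → α * c₀ * (H t + ε) ^ α * t < 1 →
      f t ≤ ((H t + ε) ^ (-α) - α * c₀ * t) ^ (-(1/α)) - ε := by
    intro ε hε hsm
    set A := H t + ε with hA_def
    have hA : 0 < A := by simp only [hA_def]; linarith
    have hAu : ∀ s, 0 ≤ s → 0 < A + u s := fun s hs => by
      have := hu_nonneg s hs; linarith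
    set W : ℝ → ℝ := fun s => (A + u s) ^ (-α) + α * c₀ * s with hW_def
    have hWd : ∀ s ∈ Set.Icc (0:ℝ) t,
        HasDerivAt W (-α * (A + u s) ^ (-α - 1) * (c₀ * g s) + α * c₀) s := by
      intro s hs
      have hpos := hAu s hs.1
      have h1 : HasDerivAt (fun x : ℝ => x ^ (-α)) (-α * (A + u s) ^ (-α - 1)) (A + u s) :=
        Real.hasDerivAt_rpow_const (Or.inl hpos.ne')
      have h2 : HasDerivAt (fun y => A + u y) (c₀ * g s) s := (hu_deriv s).const_add A
      have h3 : HasDerivAt (fun y => (A + u y) ^ (-α))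
          (-α * (A + u s) ^ (-α - 1) * (c₀ * g s)) s := by have := h1.comp s h2; exact this
      have h4 : HasDerivAt (fun y : ℝ => α * c₀ * y) (α * c₀) s := by
        simpa using (hasDerivAt_id s).const_mul (α * c₀)
      exact h3.add h4
    have hW'nn : ∀ s ∈ Set.Icc (0:ℝ) t,
        0 ≤ -α * (A + u s) ^ (-α - 1) * (c₀ * g s) + α * c₀ := by
      intro s hs
      have hsT : s ∈ Set.Icc (0:ℝ) T := ⟨hs.1, hs.2.trans htT⟩
      have hpos := hAu s hs.1
      have hfle : f s ≤ A + u s := by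
        have h5 := hfu s hsT
        have hHs : H s ≤ H t := hHmono s t hs.1 hs.2 htT
        simp only [hA_def]
        linarith
      have hgle : g s ≤ (A + u s) ^ (1 + α) := by
        rw [hg_eq s hsT]
        exact Real.rpow_le_rpow (hf_nonneg s hsT) hfle (by positivity)
      have hmul : (A + u s) ^ (-α - 1) * (A + u s) ^ (1 + α) = 1 := by
        rw [← Real.rpow_add hpos, show -α - 1 + (1 + α) = 0 by ring, Real.rpow_zero]
      have hXnn : 0 ≤ (A + u s) ^ (-α - 1) := Real.rpow_nonneg hpos.le _
      have h6 : (A + u s) ^ (-α - 1) * g s ≤ 1 := by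
        calc (A + u s) ^ (-α - 1) * g s
            ≤ (A + u s) ^ (-α - 1) * (A + u s) ^ (1 + α) :=
              mul_le_mul_of_nonneg_left hgle hXnn
          _ = 1 := hmul
      nlinarith [mul_pos hα hc₀, hg_nonneg s, mul_le_mul_of_nonneg_left h6 (mul_pos hα hc₀).le]
    have hWmono : MonotoneOn W (Set.Icc 0 t) := by
      apply monotoneOn_of_hasDerivWithinAt_nonneg (convex_Icc 0 t)
        (f' := fun s => -α * (A + u s) ^ (-α - 1) * (c₀ * g s) + α * c₀)
      · intro s hs
        exact (hWd s hs).continuousAt.continuousWithinAt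
      · intro s hs
        exact (hWd s (interior_subset hs)).hasDerivWithinAt
      · intro s hs
        exact hW'nn s (interior_subset hs)
    have hW01 : W 0 ≤ W t := hWmono ⟨le_rfl, ht0⟩ ⟨ht0, le_rfl⟩ ht0
    have e0 : W 0 = A ^ (-α) := by simp [hW_def, hu0]
    have e1 : W t = (A + u t) ^ (-α) + α * c₀ * t := rfl
    set D := A ^ (-α) - α * c₀ * t with hD_def
    have hApow : 0 < A ^ α := Real.rpow_pos_of_pos hA α
    have hE : A ^ (-α) * A ^ α = 1 := by
      rw [← Real.rpow_add hA]; simp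
    have hD : 0 < D := by
      simp only [hD_def]
      nlinarith [hsm, hApow, hE, ht0, mul_pos hα hc₀]
    have hWt : D ≤ (A + u t) ^ (-α) := by
      rw [e0, e1] at hW01
      simp only [hD_def]
      linarith
    have hAut : 0 < A + u t := hAu t ht0
    have h7 : ((A + u t) ^ (-α)) ^ (-(1/α)) = A + u t := by
      rw [← Real.rpow_mul hAut.le]
      rw [show (-α) * -(1/α) = 1 by field_simp]
      exact Real.rpow_one _
    have hfin : A + u t ≤ D ^ (-(1/α)) := by
      calc A + u t = ((A + u t) ^ (-α)) ^ (-(1/α)) := h7.symm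
        _ ≤ D ^ (-(1/α)) :=
            Real.rpow_le_rpow_of_nonpos hD hWt (neg_nonpos.mpr (by positivity))
    have h8 := hfu t htIcc
    simp only [hA_def] at hfin
    linarith
  -- smallness at t itself
  have hsm0 : α * c₀ * H t ^ α * t < 1 := by
    have h1 : H t ^ α ≤ H t₀ ^ α := Real.rpow_le_rpow hHt0 hHtle hα.le
    have h2 : H t ^ α * t ≤ H t₀ ^ α * t₀ :=
      mul_le_mul h1 htt₀ ht0 (Real.rpow_nonneg (hH0 t₀ ht₀.1 ht₀.2) α)
    nlinarith [mul_pos hα hc₀]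
  have hgoal_eq : H t + H t * ((1 - α * c₀ * H t ^ α * t) ^ (-(1/α)) - 1)
      = H t * (1 - α * c₀ * H t ^ α * t) ^ (-(1/α)) := by ring
  rw [hgoal_eq]
  -- the bound holds eventually as ε → 0⁺
  have hev_small : ∀ᶠ ε in 𝓝[>] (0:ℝ), α * c₀ * (H t + ε) ^ α * t < 1 := by
    have hcont : ContinuousAt (fun ε : ℝ => α * c₀ * (H t + ε) ^ α * t) 0 := by
      apply ContinuousAt.mul _ continuousAt_const
      apply ContinuousAt.mul continuousAt_const
      exact ((continuous_const.add continuous_id).continuousAt).rpow_const (Or.inr hα.le)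
    have htd := hcont.tendsto.mono_left (nhdsWithin_le_nhds : 𝓝[>] (0:ℝ) ≤ 𝓝 0)
    exact htd.eventually_lt_const (by simpa using hsm0)
  have hev : ∀ᶠ ε in 𝓝[>] (0:ℝ),
      f t ≤ ((H t + ε) ^ (-α) - α * c₀ * t) ^ (-(1/α)) - ε := by
    filter_upwards [hev_small, self_mem_nhdsWithin] with ε h1 h2
    exact key ε h2 h1
  rcases eq_or_lt_of_le hHt0 with hB0 | hBpos
  · -- case H t = 0
    have hlim : Tendsto (fun ε : ℝ => ((H t + ε) ^ (-α) - α * c₀ * t) ^ (-(1/α)) - ε)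
        (𝓝[>] (0:ℝ)) (𝓝 0) := by
      rw [← hB0]
      have t1 : Tendsto (fun ε : ℝ => ε ^ α) (𝓝[>] (0:ℝ)) (𝓝[>] (0:ℝ)) := by
        apply tendsto_nhdsWithin_of_tendsto_nhds_of_eventually_within
        · have hc : ContinuousAt (fun ε : ℝ => ε ^ α) 0 :=
            continuousAt_id.rpow_const (Or.inr hα.le)
          have := hc.tendsto.mono_left (nhdsWithin_le_nhds : 𝓝[>] (0:ℝ) ≤ 𝓝 0)
          simpa [Real.zero_rpow hα.ne'] using this
        · filter_upwards [self_mem_nhdsWithin] with ε hε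
          exact Real.rpow_pos_of_pos hε α
      have t2 : Tendsto (fun ε : ℝ => (ε ^ α)⁻¹) (𝓝[>] (0:ℝ)) atTop :=
        tendsto_inv_nhdsGT_zero.comp t1
      have t2' : Tendsto (fun ε : ℝ => ε ^ (-α)) (𝓝[>] (0:ℝ)) atTop := by
        apply t2.congr'
        filter_upwards [self_mem_nhdsWithin] with ε hε
        exact (Real.rpow_neg hε.le α).symm
      have t3 : Tendsto (fun ε : ℝ => ε ^ (-α) - α * c₀ * t) (𝓝[>] (0:ℝ)) atTop :=
        tendsto_atTop_add_const_right _ _ t2'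
      have t4 : Tendsto (fun ε : ℝ => (ε ^ (-α) - α * c₀ * t) ^ (-(1/α)))
          (𝓝[>] (0:ℝ)) (𝓝 0) :=
        (tendsto_rpow_neg_atTop (by positivity)).comp t3
      have t5 : Tendsto (fun ε : ℝ => ε) (𝓝[>] (0:ℝ)) (𝓝 0) :=
        tendsto_id.mono_right nhdsWithin_le_nhds
      have := t4.sub t5
      simpa using this
    have hft : f t ≤ 0 := ge_of_tendsto hlim hev
    rw [← hB0]
    simpa using hft
  · -- case H t > 0
    have hD₀ : 0 < H t ^ (-α) - α * c₀ * t := by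
      have hBpow : 0 < H t ^ α := Real.rpow_pos_of_pos hBpos α
      have hE : H t ^ (-α) * H t ^ α = 1 := by
        rw [← Real.rpow_add hBpos]; simp
      nlinarith [hsm0]
    have hct : ContinuousAt
        (fun ε : ℝ => ((H t + ε) ^ (-α) - α * c₀ * t) ^ (-(1/α)) - ε) 0 := by
      have hc1 : ContinuousAt (fun ε : ℝ => (H t + ε) ^ (-α)) 0 :=
        ((continuous_const.add continuous_id).continuousAt).rpow_const
          (Or.inl (by simpa using hBpos.ne'))
      have hc2 : ContinuousAt (fun ε : ℝ => (H t + ε) ^ (-α) - α * c₀ * t) 0 :=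
        hc1.sub continuousAt_const
      have hc3 : ContinuousAt
          (fun ε : ℝ => ((H t + ε) ^ (-α) - α * c₀ * t) ^ (-(1/α))) 0 :=
        hc2.rpow_const (Or.inl (by simpa using hD₀.ne'))
      exact hc3.sub continuousAt_id
    have hlim := hct.tendsto.mono_left (nhdsWithin_le_nhds : 𝓝[>] (0:ℝ) ≤ 𝓝 0)
    have hft := ge_of_tendsto hlim hev
    simp only [add_zero, sub_zero] at hft
    have halg : (H t ^ (-α) - α * c₀ * t) ^ (-(1/α))
        = H t * (1 - α * c₀ * H t ^ α * t) ^ (-(1/α)) := by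
      have hE : H t ^ α * H t ^ (-α) = 1 := by
        rw [← Real.rpow_add hBpos]; simp
      have h1 : 1 - α * c₀ * H t ^ α * t = H t ^ α * (H t ^ (-α) - α * c₀ * t) := by
        linear_combination -hE
      rw [h1, Real.mul_rpow (Real.rpow_nonneg hBpos.le α) hD₀.le]
      have h2 : (H t ^ α) ^ (-(1/α)) = (H t)⁻¹ := by
        rw [← Real.rpow_mul hBpos.le]
        rw [show α * -(1/α) = -1 by field_simp]
        exact Real.rpow_neg_one _
      rw [h2, ← mul_assoc, mul_inv_cancel₀ hBpos.ne', one_mul]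
    rw [← halg]
    exact hft
end
end
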